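/- Let B̃ ∈ ℝ^{N×k} have full column rank k (k ≤ N), let D ∈ ℝ^{k×k} be diagonal with strictly positive diagonal entries, and let σ > 0. Then the limit as λ → 0⁺ of [ log det(λ I_N + σ² B̃·B̃ᵀ) − log det(λ I_N + B̃·D·B̃ᵀ) ] exists and equals 2k·log σ − log det D. -/

import Mathlib

open Matrix

private lemma posDef_transpose_mul_self' {N k : ℕ} (B : Matrix (Fin N) (Fin k) ℝ)
    (hrank : B.rank = k) : (Bᵀ * B).PosDef := by
  have hinj : Function.Injective B.mulVecLin := by
    rw [← LinearMap.ker_eq_bot]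
    have h := LinearMap.finrank_range_add_finrank_ker B.mulVecLin
    rw [Matrix.rank] at hrank
    rw [hrank] at h
    simp only [Module.finrank_pi, Fintype.card_fin] at h
    exact Submodule.finrank_eq_zero.mp (by omega)
  refine Matrix.PosDef.of_dotProduct_mulVec_pos ?_ (fun x hx => ?_)
  · have h := Matrix.isHermitian_conjTranspose_mul_self B
    rwa [show Bᴴ = Bᵀ from by ext i j; simp [conjTranspose_apply]] at h
  · have hBx : B *ᵥ x ≠ 0 := by
      intro h
      apply hx
      apply hinj
      simpa using h
    have : star x ⬝ᵥ ((Bᵀ * B) *ᵥ x) = star (B *ᵥ x) ⬝ᵥ (B *ᵥ x) := by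
      simp only [star_trivial, ← mulVec_mulVec, dotProduct_mulVec, vecMul_transpose]
    rw [this]
    exact dotProduct_star_self_pos_iff.mpr hBx

private lemma det_wa {N k : ℕ} (B : Matrix (Fin N) (Fin k) ℝ) (C : Matrix (Fin k) (Fin N) ℝ)
    {l : ℝ} (hl : 0 < l) (hkN : k ≤ N) :
    (l • (1 : Matrix (Fin N) (Fin N) ℝ) + B * C).det
      = l ^ (N - k) * (l • (1 : Matrix (Fin k) (Fin k) ℝ) + C * B).det := by
  have hl0 : l ≠ 0 := hl.ne'
  have h1 : l • (1 : Matrix (Fin N) (Fin N) ℝ) + B * C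
      = l • ((1 : Matrix (Fin N) (Fin N) ℝ) + B * (l⁻¹ • C)) := by
    rw [smul_add, Matrix.mul_smul, smul_smul, mul_inv_cancel₀ hl0, one_smul]
  have h2 : (1 : Matrix (Fin k) (Fin k) ℝ) + (l⁻¹ • C) * B
      = l⁻¹ • (l • (1 : Matrix (Fin k) (Fin k) ℝ) + C * B) := by
    rw [smul_add, Matrix.smul_mul, smul_smul, inv_mul_cancel₀ hl0, one_smul]
  rw [h1, det_smul, Matrix.det_one_add_mul_comm, h2, det_smul]
  simp only [Fintype.card_fin, smul_eq_mul]
  rw [← mul_assoc]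
  congr 1
  rw [inv_pow, pow_sub₀ l hl0 hkN]

private lemma posDef_smul_add {k : ℕ} {A : Matrix (Fin k) (Fin k) ℝ} (hA : A.PosDef)
    {l : ℝ} (hl : 0 ≤ l) : (l • (1 : Matrix (Fin k) (Fin k) ℝ) + A).PosDef := by
  have h1 : (l • (1 : Matrix (Fin k) (Fin k) ℝ)).PosSemidef := by
    rw [smul_one_eq_diagonal]
    exact Matrix.PosSemidef.diagonal (fun i => hl)
  exact Matrix.PosDef.posSemidef_add h1 hA

/-- **Log-determinant-ratio limit** (Equations (27)–(34)).
If `B̃ : ℝ^{N×k}` has full column rank `k`, `D = diag(d)` with `d > 0` entrywise, and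
`σ > 0`, then `log det(λ I_N + σ² B̃B̃ᵀ) − log det(λ I_N + B̃DB̃ᵀ) → 2k log σ − log det D`
as `λ → 0⁺`. -/
theorem logDet_ratio_tendsto {N k : ℕ}
    (Bt : Matrix (Fin N) (Fin k) ℝ) (hrank : Bt.rank = k)
    (d : Fin k → ℝ) (hd : ∀ t, 0 < d t) (σ : ℝ) (hσ : 0 < σ) :
    Filter.Tendsto
      (fun l : ℝ =>
        Real.log (l • (1 : Matrix (Fin N) (Fin N) ℝ) + σ ^ 2 • (Bt * Btᵀ)).det
          - Real.log
              (l • (1 : Matrix (Fin N) (Fin N) ℝ) + Bt * Matrix.diagonal d * Btᵀ).det)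
      (nhdsWithin 0 (Set.Ioi 0))
      (nhds (2 * k * Real.log σ - Real.log (Matrix.diagonal d).det)) := by
  have hkN : k ≤ N := by
    have := Bt.rank_le_card_height
    simpa [hrank] using this
  set S : Matrix (Fin k) (Fin k) ℝ := Matrix.diagonal (fun i => Real.sqrt (d i)) with hS
  have hSS : S * S = Matrix.diagonal d := by
    rw [hS, diagonal_mul_diagonal]
    exact congrArg _ (funext fun i => Real.mul_self_sqrt (hd i).le)
  have hSdet : IsUnit S.det := by
    rw [hS, det_diagonal]
    exact (Finset.prod_pos (fun i _ => Real.sqrt_pos.mpr (hd i))).ne'.isUnit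
  set B₂ : Matrix (Fin N) (Fin k) ℝ := Bt * S with hB₂
  have hB₂rank : B₂.rank = k := by
    rw [hB₂, Matrix.rank_mul_eq_left_of_isUnit_det S Bt hSdet, hrank]
  set M : Matrix (Fin k) (Fin k) ℝ := Btᵀ * Bt with hMdef
  set M₂ : Matrix (Fin k) (Fin k) ℝ := B₂ᵀ * B₂ with hM₂def
  have hM : M.PosDef := posDef_transpose_mul_self' Bt hrank
  have hM₂ : M₂.PosDef := posDef_transpose_mul_self' B₂ hB₂rank
  have hMs : (σ ^ 2 • M).PosDef := by
    refine Matrix.PosDef.of_dotProduct_mulVec_pos ?_ (fun x hx => ?_)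
    · have := hM.1
      rw [Matrix.IsHermitian] at this ⊢
      rw [conjTranspose_smul, this]
      simp
    · rw [smul_mulVec, dotProduct_smul, smul_eq_mul]
      exact mul_pos (pow_pos hσ 2) (hM.dotProduct_mulVec_pos hx)
  -- decomposition facts
  have hdec1 : σ ^ 2 • (Bt * Btᵀ) = Bt * (σ ^ 2 • Btᵀ) := (Matrix.mul_smul _ _ _).symm
  have hdec1' : (σ ^ 2 • Btᵀ) * Bt = σ ^ 2 • M := Matrix.smul_mul _ _ _
  have hSt : Sᵀ = S := by rw [hS]; exact diagonal_transpose _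
  have hdec2 : Bt * Matrix.diagonal d * Btᵀ = B₂ * B₂ᵀ := by
    rw [hB₂, transpose_mul, hSt, ← hSS, Matrix.mul_assoc, Matrix.mul_assoc, Matrix.mul_assoc]
  have hdec2' : B₂ᵀ * B₂ = M₂ := rfl
  -- the simplified function
  set g : ℝ → ℝ := fun l =>
    Real.log (l • (1 : Matrix (Fin k) (Fin k) ℝ) + σ ^ 2 • M).det
      - Real.log (l • (1 : Matrix (Fin k) (Fin k) ℝ) + M₂).det with hg
  have heq : ∀ l ∈ Set.Ioi (0 : ℝ),
      Real.log (l • (1 : Matrix (Fin N) (Fin N) ℝ) + σ ^ 2 • (Bt * Btᵀ)).det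
        - Real.log (l • (1 : Matrix (Fin N) (Fin N) ℝ) + Bt * Matrix.diagonal d * Btᵀ).det
      = g l := by
    intro l hl
    rw [Set.mem_Ioi] at hl
    have w1 := det_wa Bt (σ ^ 2 • Btᵀ) hl hkN
    rw [← hdec1, hdec1'] at w1
    have w2 := det_wa B₂ B₂ᵀ hl hkN
    rw [← hdec2, hdec2'] at w2
    have hp1 : (0:ℝ) < (l • (1 : Matrix (Fin k) (Fin k) ℝ) + σ ^ 2 • M).det :=
      (posDef_smul_add hMs hl.le).det_pos
    have hp2 : (0:ℝ) < (l • (1 : Matrix (Fin k) (Fin k) ℝ) + M₂).det :=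
      (posDef_smul_add hM₂ hl.le).det_pos
    rw [w1, w2, Real.log_mul (pow_ne_zero _ hl.ne') hp1.ne',
      Real.log_mul (pow_ne_zero _ hl.ne') hp2.ne', hg]
    ring
  -- continuity of g at 0
  have hc1 : Continuous fun l : ℝ => (l • (1 : Matrix (Fin k) (Fin k) ℝ) + σ ^ 2 • M).det :=
    ((continuous_id.smul continuous_const).add continuous_const).matrix_det
  have hc2 : Continuous fun l : ℝ => (l • (1 : Matrix (Fin k) (Fin k) ℝ) + M₂).det :=
    ((continuous_id.smul continuous_const).add continuous_const).matrix_det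
  have hv1 : ((0:ℝ) • (1 : Matrix (Fin k) (Fin k) ℝ) + σ ^ 2 • M) = σ ^ 2 • M := by
    rw [zero_smul, zero_add]
  have hv2 : ((0:ℝ) • (1 : Matrix (Fin k) (Fin k) ℝ) + M₂) = M₂ := by
    rw [zero_smul, zero_add]
  have hgc : ContinuousAt g 0 := by
    apply ContinuousAt.sub
    · exact (Real.continuousAt_log (by rw [hv1]; exact hMs.det_pos.ne')).comp hc1.continuousAt
    · exact (Real.continuousAt_log (by rw [hv2]; exact hM₂.det_pos.ne')).comp hc2.continuousAt
  have hg0 : g 0 = 2 * k * Real.log σ - Real.log (Matrix.diagonal d).det := by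
    have hdetM2 : M₂.det = (Matrix.diagonal d).det * M.det := by
      have h : M₂ = S * M * S := by
        rw [hM₂def, hB₂, transpose_mul, hSt, hMdef, Matrix.mul_assoc, Matrix.mul_assoc,
          Matrix.mul_assoc]
      rw [h, det_mul, det_mul, ← hSS, det_mul]
      ring
    have hDdet : (0:ℝ) < (Matrix.diagonal d).det := by
      rw [det_diagonal]; exact Finset.prod_pos fun i _ => hd i
    rw [hg]
    simp only [hv1, hv2]
    rw [det_smul, Fintype.card_fin, hdetM2,
      Real.log_mul (pow_ne_zero k (by positivity : (σ:ℝ) ^ 2 ≠ 0)) hM.det_pos.ne',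
      Real.log_mul hDdet.ne' hM.det_pos.ne', Real.log_pow, Real.log_pow]
    push_cast
    ring
  have htend : Filter.Tendsto g (nhdsWithin 0 (Set.Ioi 0)) (nhds (g 0)) :=
    hgc.tendsto.mono_left nhdsWithin_le_nhds
  rw [hg0] at htend
  refine htend.congr' ?_
  exact Filter.eventuallyEq_of_mem self_mem_nhdsWithin (fun l hl => (heq l hl).symm)
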